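/- Every I-matching of size k ≥ 3 contains at least two blocks, and for k ≥ 5 these can be chosen disjoint. -/

import Mathlib

/-- Two chords of points in convex position cross (in the order a < c < b < d). -/
def Cross {n : ℕ} (e f : Sym2 (Fin n)) : Prop :=
  ∃ a b c d : Fin n, e = s(a, b) ∧ f = s(c, d) ∧ a < c ∧ c < b ∧ b < d

/-- A non-crossing perfect matching of `n` points in convex position. -/
def IsNCMatching {n : ℕ} (M : Finset (Sym2 (Fin n))) : Prop :=
  (∀ e ∈ M, ¬ e.IsDiag) ∧
  (∀ v : Fin n, ∃! e, e ∈ M ∧ v ∈ e) ∧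
  (∀ e ∈ M, ∀ f ∈ M, ¬ Cross e f)

/-- Disjoint compatibility: no common edge, no crossing edges. -/
def DisjCompat {n : ℕ} (M M' : Finset (Sym2 (Fin n))) : Prop :=
  (∀ e ∈ M, e ∉ M') ∧ (∀ e ∈ M, ∀ f ∈ M', ¬ Cross e f ∧ ¬ Cross f e)

/-- Cyclic shift of an index by `j`. -/
def cyc {n : ℕ} (i : Fin n) (j : ℕ) : Fin n :=
  ⟨((i : ℕ) + j) % n, Nat.mod_lt _ i.pos⟩

def blockEdges {n : ℕ} (i : Fin n) : Finset (Sym2 (Fin n)) :=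
  {s(i, cyc i 3), s(cyc i 1, cyc i 2)}

def antiblockEdges {n : ℕ} (i : Fin n) : Finset (Sym2 (Fin n)) :=
  {s(i, cyc i 1), s(cyc i 2, cyc i 3)}

def IsBlock {n : ℕ} (M : Finset (Sym2 (Fin n))) (i : Fin n) : Prop :=
  blockEdges i ⊆ M

def IsAntiblock {n : ℕ} (M : Finset (Sym2 (Fin n))) (i : Fin n) : Prop :=
  antiblockEdges i ⊆ M

def IsSepPair {n : ℕ} (M S : Finset (Sym2 (Fin n))) : Prop :=
  (∃ i, S = blockEdges i ∨ S = antiblockEdges i) ∧ S ⊆ M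

/-- Insert a block (4 new consecutive points, outer edge and nested inner edge)
into a matching, at the gap after the first `t` points. -/
def insertBlock {n : ℕ} (M : Finset (Sym2 (Fin n))) (t : Fin (n+1)) :
    Finset (Sym2 (Fin (n+4))) :=
  M.image (Sym2.map (fun i : Fin n =>
    if (i : ℕ) < (t : ℕ) then (⟨(i : ℕ), by have := i.isLt; omega⟩ : Fin (n+4))
    else ⟨(i : ℕ) + 4, by have := i.isLt; omega⟩)) ∪
  {s((⟨(t : ℕ), by have := t.isLt; omega⟩ : Fin (n+4)),
     ⟨(t : ℕ) + 3, by have := t.isLt; omega⟩),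
   s((⟨(t : ℕ) + 1, by have := t.isLt; omega⟩ : Fin (n+4)),
     ⟨(t : ℕ) + 2, by have := t.isLt; omega⟩)}

inductive IsIMatching : ∀ n : ℕ, Finset (Sym2 (Fin n)) → Prop
  | base : IsIMatching 2 {s(0, 1)}
  | step {n : ℕ} (M : Finset (Sym2 (Fin n))) (t : Fin (n+1)) :
      IsIMatching n M → IsIMatching (n+4) (insertBlock M t)

inductive IsLMatching : ∀ n : ℕ, Finset (Sym2 (Fin n)) → Prop
  | ring2a : IsLMatching 4 {s(0, 1), s(2, 3)}
  | ring2b : IsLMatching 4 {s(1, 2), s(3, 0)}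
  | ring3a : IsLMatching 6 {s(0, 1), s(2, 3), s(4, 5)}
  | ring3b : IsLMatching 6 {s(1, 2), s(3, 4), s(5, 0)}
  | step {n : ℕ} (M : Finset (Sym2 (Fin n))) (t : Fin (n+1)) :
      IsLMatching n M → IsLMatching (n+4) (insertBlock M t)


section Aux

/-- `g` is an interior gap of the block at `i`. -/
def interiorGap {n : ℕ} (i g : Fin n) : Prop :=
  g = cyc i 1 ∨ g = cyc i 2 ∨ g = cyc i 3

instance {n : ℕ} (i g : Fin n) : Decidable (interiorGap i g) :=
  inferInstanceAs (Decidable (_ ∨ _ ∨ _))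

instance {n : ℕ} (M : Finset (Sym2 (Fin n))) (i : Fin n) : Decidable (IsBlock M i) :=
  inferInstanceAs (Decidable (blockEdges i ⊆ M))

lemma two_mod (m k : ℕ) (hk : 0 < k) (hm : m < 2*k) :
    (m % k = m ∧ m < k) ∨ (m % k = m - k ∧ k ≤ m) := by
  rcases Nat.lt_or_ge m k with h | h
  · exact Or.inl ⟨Nat.mod_eq_of_lt h, h⟩
  · exact Or.inr ⟨by rw [Nat.mod_eq_sub_mod h, Nat.mod_eq_of_lt (by omega)], h⟩

lemma phi_arith (n t a k iv p1 p2 p3 pk s q : ℕ)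
    (hn : 6 ≤ n) (ha : a < n) (ht : t ≤ n) (hk : k ≤ 3)
    (hiv : (a < t ∧ iv = a) ∨ (t ≤ a ∧ iv = a + 4))
    (hp1 : (p1 = a+1 ∧ a+1 < n) ∨ (p1 = a+1-n ∧ n ≤ a+1))
    (hp2 : (p2 = a+2 ∧ a+2 < n) ∨ (p2 = a+2-n ∧ n ≤ a+2))
    (hp3 : (p3 = a+3 ∧ a+3 < n) ∨ (p3 = a+3-n ∧ n ≤ a+3))
    (hpk : (pk = a+k ∧ a+k < n) ∨ (pk = a+k-n ∧ n ≤ a+k))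
    (hs : (s = t ∧ t < n) ∨ (s = t-n ∧ n ≤ t))
    (hq : (q = iv+k ∧ iv+k < n+4) ∨ (q = iv+k-(n+4) ∧ n+4 ≤ iv+k))
    (h1 : s ≠ p1) (h2 : s ≠ p2) (h3 : s ≠ p3) :
    (if pk < t then pk else pk + 4) = q ∧ (q < t ∨ t + 3 < q) := by
  rcases hiv with ⟨hv,rfl⟩|⟨hv,rfl⟩ <;> rcases hs with ⟨rfl,hb⟩|⟨rfl,hb⟩ <;>
    rcases hpk with ⟨rfl,hc⟩|⟨rfl,hc⟩ <;> split_ifs <;> omega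

lemma phi_spec (n t a k : ℕ) (hn : 6 ≤ n) (ha : a < n) (ht : t ≤ n) (hk : k ≤ 3)
    (h1 : t % n ≠ (a+1) % n) (h2 : t % n ≠ (a+2) % n) (h3 : t % n ≠ (a+3) % n) :
    (if (a+k) % n < t then (a+k) % n else (a+k) % n + 4)
      = ((if a < t then a else a + 4) + k) % (n+4)
    ∧ (((if a < t then a else a+4) + k) % (n+4) < t
        ∨ t + 3 < ((if a < t then a else a+4) + k) % (n+4)) := by
  refine phi_arith n t a k (if a < t then a else a+4) ((a+1) % n) ((a+2) % n)
    ((a+3) % n) ((a+k) % n) (t % n) (((if a < t then a else a+4) + k) % (n+4))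
    hn ha ht hk ?_ (two_mod _ _ (by omega) (by omega)) (two_mod _ _ (by omega) (by omega))
    (two_mod _ _ (by omega) (by omega)) (two_mod _ _ (by omega) (by omega))
    (two_mod _ _ (by omega) (by omega)) (two_mod _ _ (by omega) (by split_ifs <;> omega))
    h1 h2 h3
  split_ifs with h
  · exact Or.inl ⟨h, rfl⟩
  · exact Or.inr ⟨by omega, rfl⟩

lemma step_main {n : ℕ} (M : Finset (Sym2 (Fin n))) (t : Fin (n+1)) (i : Fin n)
    (hn : 6 ≤ n) (hbi : IsBlock M i)
    (h1 : (t:ℕ) % n ≠ ((i:ℕ)+1) % n) (h2 : (t:ℕ) % n ≠ ((i:ℕ)+2) % n)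
    (h3 : (t:ℕ) % n ≠ ((i:ℕ)+3) % n) :
    ∃ i' j' : Fin (n+4), IsBlock (insertBlock M t) i' ∧ IsBlock (insertBlock M t) j' ∧
      blockEdges i' ≠ blockEdges j' ∧ (∀ g, ¬(interiorGap i' g ∧ interiorGap j' g)) ∧
      Disjoint (blockEdges i') (blockEdges j') := by
  have ha : (i:ℕ) < n := i.isLt
  have ht : (t:ℕ) ≤ n := by have := t.isLt; omega
  set i' : Fin (n+4) := ⟨if (i:ℕ) < (t:ℕ) then (i:ℕ) else (i:ℕ)+4,
    by split_ifs <;> omega⟩ with hi'def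
  set j' : Fin (n+4) := ⟨(t:ℕ), by omega⟩ with hj'def
  have key : ∀ k, k ≤ 3 →
      ((cyc i' k : ℕ) = (if ((i:ℕ)+k) % n < (t:ℕ) then ((i:ℕ)+k) % n
        else ((i:ℕ)+k) % n + 4)) ∧
      ((cyc i' k : ℕ) < (t:ℕ) ∨ (t:ℕ)+3 < (cyc i' k : ℕ)) := by
    intro k hk
    have H := phi_spec n (t:ℕ) (i:ℕ) k hn ha ht hk h1 h2 h3
    have hval : (cyc i' k : ℕ)
        = ((if (i:ℕ) < (t:ℕ) then (i:ℕ) else (i:ℕ)+4) + k) % (n+4) := rfl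
    rw [hval]
    exact ⟨H.1.symm, H.2⟩
  let F : Fin n → Fin (n + 4) := fun x =>
    if (x : ℕ) < (t : ℕ) then ⟨(x : ℕ), by have := x.isLt; omega⟩
    else ⟨(x : ℕ) + 4, by have := x.isLt; omega⟩
  have memIm : ∀ e ∈ M, Sym2.map F e ∈ insertBlock M t := by
    intro e he
    have h' : Sym2.map F e ∈ M.image (Sym2.map F) := Finset.mem_image_of_mem _ he
    unfold insertBlock
    exact Finset.mem_union_left _ h'
  have hFv : ∀ x : Fin n, (F x : ℕ) = if (x:ℕ) < (t:ℕ) then (x:ℕ) else (x:ℕ)+4 := by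
    intro x
    show (Fin.val (if (x : ℕ) < (t : ℕ) then _ else _)) = _
    rw [apply_ite Fin.val]
  have hF : ∀ k, k ≤ 3 → F (cyc i k) = cyc i' k := by
    intro k hk
    apply Fin.ext
    rw [hFv]
    have hc : ((cyc i k) : ℕ) = ((i:ℕ) + k) % n := rfl
    rw [hc]
    exact ((key k hk).1).symm
  have c0 : cyc i 0 = i := Fin.ext (by simp [cyc, Nat.mod_eq_of_lt ha])
  have c0' : cyc i' 0 = i' := Fin.ext (by simp [cyc, Nat.mod_eq_of_lt i'.isLt])
  have hFi : F i = i' := by rw [← c0, hF 0 (by norm_num), c0']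
  have e1M : s(i, cyc i 3) ∈ M := hbi (by simp [blockEdges])
  have e2M : s(cyc i 1, cyc i 2) ∈ M := hbi (by simp [blockEdges])
  have m1 : s(i', cyc i' 3) ∈ insertBlock M t := by
    have hm := memIm _ e1M
    rwa [Sym2.map_pair_eq, hFi, hF 3 (by norm_num)] at hm
  have m2 : s(cyc i' 1, cyc i' 2) ∈ insertBlock M t := by
    have hm := memIm _ e2M
    rwa [Sym2.map_pair_eq, hF 1 (by norm_num), hF 2 (by norm_num)] at hm
  have hbi' : IsBlock (insertBlock M t) i' := by
    intro e he
    simp only [blockEdges, Finset.mem_insert, Finset.mem_singleton] at he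
    rcases he with rfl | rfl
    exacts [m1, m2]
  have cj : ∀ k, k ≤ 3 → (cyc j' k : ℕ) = (t:ℕ) + k := by
    intro k hk
    show ((t:ℕ) + k) % (n+4) = (t:ℕ) + k
    exact Nat.mod_eq_of_lt (by omega)
  have hbj' : IsBlock (insertBlock M t) j' := by
    intro e he
    simp only [blockEdges, Finset.mem_insert, Finset.mem_singleton] at he
    unfold insertBlock
    apply Finset.mem_union_right
    rcases he with rfl | rfl
    · have h3' : cyc j' 3 = ⟨(t:ℕ)+3, by omega⟩ := Fin.ext (cj 3 (by norm_num))
      rw [h3']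
      exact Finset.mem_insert_self _ _
    · have hc1 : cyc j' 1 = ⟨(t:ℕ)+1, by omega⟩ := Fin.ext (cj 1 (by norm_num))
      have hc2 : cyc j' 2 = ⟨(t:ℕ)+2, by omega⟩ := Fin.ext (cj 2 (by norm_num))
      rw [hc1, hc2]
      exact Finset.mem_insert_of_mem (Finset.mem_singleton_self _)
  have A0 : (i':ℕ) < (t:ℕ) ∨ (t:ℕ)+3 < (i':ℕ) := by
    have h0 := (key 0 (by norm_num)).2
    rwa [c0'] at h0
  have A1 := (key 1 (by norm_num)).2
  have A2 := (key 2 (by norm_num)).2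
  have A3 := (key 3 (by norm_num)).2
  have d0 : (j':ℕ) = (t:ℕ) := rfl
  have d1 := cj 1 (by norm_num)
  have d2 := cj 2 (by norm_num)
  have d3 := cj 3 (by norm_num)
  have hdisj : Disjoint (blockEdges i') (blockEdges j') := by
    rw [Finset.disjoint_left]
    intro e he hj
    simp only [blockEdges, Finset.mem_insert, Finset.mem_singleton] at he hj
    rcases he with rfl | rfl <;> rcases hj with h | h <;>
      simp only [Sym2.eq_iff, Fin.ext_iff] at h <;> omega
  have hint : ∀ g, ¬(interiorGap i' g ∧ interiorGap j' g) := by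
    rintro g ⟨hg1, hg2⟩
    unfold interiorGap at hg1 hg2
    rcases hg1 with rfl | rfl | rfl <;> rcases hg2 with h | h | h <;>
      rw [Fin.ext_iff] at h <;> omega
  have hne : blockEdges i' ≠ blockEdges j' := by
    intro hEq
    have hmem : s(i', cyc i' 3) ∈ blockEdges i' := by simp [blockEdges]
    exact (Finset.disjoint_left.mp hdisj hmem) (hEq ▸ hmem)
  exact ⟨i', j', hbi', hbj', hne, hint, hdisj⟩

lemma imatching_mod4 {n : ℕ} {M : Finset (Sym2 (Fin n))} (h : IsIMatching n M) :
    n % 4 = 2 := by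
  induction h with
  | base => rfl
  | step _ _ _ ih => omega

lemma imatching_two {M : Finset (Sym2 (Fin 2))} (h : IsIMatching 2 M) :
    M = {s(0,1)} := by
  cases h with
  | base => rfl

lemma iMatching_key {n : ℕ} {M : Finset (Sym2 (Fin n))} (h : IsIMatching n M) :
    6 ≤ n → ∃ i j : Fin n, IsBlock M i ∧ IsBlock M j ∧ blockEdges i ≠ blockEdges j ∧
      (∀ g, ¬(interiorGap i g ∧ interiorGap j g)) ∧
      (10 ≤ n → Disjoint (blockEdges i) (blockEdges j)) := by
  induction h with
  | base => intro h; exact absurd h (by norm_num)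
  | @step n M t hM ih =>
    intro _
    have hmod : n % 4 = 2 := imatching_mod4 hM
    by_cases hn2 : n = 2
    · subst hn2
      have hM2 : M = {s(0,1)} := imatching_two hM
      subst hM2
      fin_cases t <;> decide
    · have hn6 : 6 ≤ n := by omega
      obtain ⟨i, j, hbi, hbj, hne, hint, -⟩ := ih hn6
      have hnpos : 0 < n := by omega
      have hsplit : ¬ interiorGap i ⟨(t:ℕ) % n, Nat.mod_lt _ hnpos⟩ ∨
          ¬ interiorGap j ⟨(t:ℕ) % n, Nat.mod_lt _ hnpos⟩ := by
        have := hint ⟨(t:ℕ) % n, Nat.mod_lt _ hnpos⟩; tauto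
      have conv : ∀ (x : Fin n), ¬ interiorGap x ⟨(t:ℕ) % n, Nat.mod_lt _ hnpos⟩ →
          ((t:ℕ) % n ≠ ((x:ℕ)+1) % n ∧ (t:ℕ) % n ≠ ((x:ℕ)+2) % n ∧
            (t:ℕ) % n ≠ ((x:ℕ)+3) % n) := by
        intro x hx
        unfold interiorGap at hx
        push_neg at hx
        obtain ⟨hx1, hx2, hx3⟩ := hx
        exact ⟨fun hEq => hx1 (Fin.ext hEq), fun hEq => hx2 (Fin.ext hEq),
          fun hEq => hx3 (Fin.ext hEq)⟩
      rcases hsplit with hx | hx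
      · obtain ⟨c1, c2, c3⟩ := conv i hx
        obtain ⟨i', j', p1, p2, p3, p4, p5⟩ := step_main M t i hn6 hbi c1 c2 c3
        exact ⟨i', j', p1, p2, p3, p4, fun _ => p5⟩
      · obtain ⟨c1, c2, c3⟩ := conv j hx
        obtain ⟨i', j', p1, p2, p3, p4, p5⟩ := step_main M t j hn6 hbj c1 c2 c3
        exact ⟨i', j', p1, p2, p3, p4, fun _ => p5⟩

end Aux

/-- Every I-matching of size `k ≥ 3` (i.e. on `n = 2k ≥ 6` points) contains at
least two blocks, which for `k ≥ 5` can be chosen disjoint. -/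
theorem IMatching_two_blocks (n : ℕ) (M : Finset (Sym2 (Fin n)))
    (hM : IsIMatching n M) :
    (6 ≤ n → ∃ i j : Fin n, IsBlock M i ∧ IsBlock M j ∧ blockEdges i ≠ blockEdges j) ∧
    (10 ≤ n → ∃ i j : Fin n, IsBlock M i ∧ IsBlock M j ∧
      Disjoint (blockEdges i) (blockEdges j)) := by
  constructor
  · intro h6
    obtain ⟨i, j, h1, h2, h3, -, -⟩ := iMatching_key hM h6
    exact ⟨i, j, h1, h2, h3⟩
  · intro h10
    obtain ⟨i, j, h1, h2, -, -, h5⟩ := iMatching_key hM (by omega)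
    exact ⟨i, j, h1, h2, h5 h10⟩
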